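/- There is a unique formal power series V ∈ ℚ[[q]] with constant term 1 satisfying q³·V² − (q⁵ + q³ − q² − 1)·V = q⁴ + q³ + q² + q + 1, and V has integer coefficients with V = 1 + q + q⁶ − q⁸ − q⁹ − q¹⁰ + O(q¹¹). -/

import Mathlib

open PowerSeries Finset

set_option maxHeartbeats 1000000 in
noncomputable def qa : ℕ → ℚ
  | n =>
    (if n ≤ 4 then (1:ℚ) else 0)
    - (if h : 2 ≤ n then qa (n-2) else 0)
    + (if h : 3 ≤ n then qa (n-3) else 0)
    + (if h : 5 ≤ n then qa (n-5) else 0)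
    - (if h : 3 ≤ n then ∑ i ∈ (range (n-2)).attach,
        qa i.1 * qa (n-3-i.1) else 0)
  termination_by n => n
  decreasing_by
  · omega
  · omega
  · omega
  · have := i.2; rw [Finset.mem_range] at this; omega
  · have := i.2; rw [Finset.mem_range] at this; omega

lemma qa_eq (n : ℕ) : qa n =
    (if n ≤ 4 then (1:ℚ) else 0)
    - (if 2 ≤ n then qa (n-2) else 0)
    + (if 3 ≤ n then qa (n-3) else 0)
    + (if 5 ≤ n then qa (n-5) else 0)
    - (if 3 ≤ n then ∑ i ∈ range (n-2), qa i * qa (n-3-i) else 0) := by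
  conv_lhs => rw [qa]
  simp only [dite_eq_ite]
  have h : (if 3 ≤ n then ∑ i ∈ (range (n-2)).attach, qa i.1 * qa (n-3-i.1) else 0)
      = (if 3 ≤ n then ∑ i ∈ range (n-2), qa i * qa (n-3-i) else 0) := by
    split_ifs
    · exact Finset.sum_attach (range (n-2)) (fun i => qa i * qa (n-3-i))
    · rfl
  rw [h]

lemma qa_spec (n : ℕ) :
    (if 3 ≤ n then ∑ i ∈ range (n-3+1), qa i * qa (n-3-i) else 0)
      - (if 5 ≤ n then qa (n-5) else 0) - (if 3 ≤ n then qa (n-3) else 0)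
      + (if 2 ≤ n then qa (n-2) else 0) + qa n = if n ≤ 4 then 1 else 0 := by
  rw [qa_eq n]
  by_cases h3 : 3 ≤ n
  · rw [show n - 3 + 1 = n - 2 by omega]
    split_ifs <;> ring
  · simp only [if_neg h3]
    split_ifs <;> ring

noncomputable def qV : PowerSeries ℚ := PowerSeries.mk qa

lemma coeff_qV (n : ℕ) : coeff n qV = qa n := coeff_mk n qa

lemma constCoeff_qV : constantCoeff qV = 1 := by
  have := coeff_qV 0
  rw [coeff_zero_eq_constantCoeff] at this
  rw [this, qa_eq]; norm_num

lemma coeff_P (n : ℕ) :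
    coeff n (X^4 + X^3 + X^2 + X + 1 : PowerSeries ℚ) = if n ≤ 4 then 1 else 0 := by
  have : (X^4 + X^3 + X^2 + X + 1 : PowerSeries ℚ)
      = X^4 + X^3 + X^2 + X^1 + X^0 := by ring
  rw [this]
  simp only [map_add, coeff_X_pow]
  split_ifs <;> simp_all <;> omega

lemma coeff_qV_sq (m : ℕ) :
    coeff m (qV ^ 2) = ∑ i ∈ range (m + 1), qa i * qa (m - i) := by
  rw [pow_two, coeff_mul, Finset.Nat.sum_antidiagonal_eq_sum_range_succ_mk]
  simp [coeff_qV]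

lemma qV_equation :
    X ^ 3 * qV ^ 2 - (X ^ 5 + X ^ 3 - X ^ 2 - 1) * qV
      = X ^ 4 + X ^ 3 + X ^ 2 + X + 1 := by
  have h : X ^ 3 * qV ^ 2 - (X ^ 5 + X ^ 3 - X ^ 2 - 1) * qV
      = X ^ 3 * qV ^ 2 - X ^ 5 * qV - X ^ 3 * qV + X ^ 2 * qV + qV := by ring
  rw [h]
  ext n
  rw [coeff_P]
  simp only [map_add, map_sub, coeff_X_pow_mul', coeff_qV, coeff_qV_sq]
  exact qa_spec n

lemma qV_unique (V : PowerSeries ℚ) (hV1 : constantCoeff V = 1)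
    (hV2 : X ^ 3 * V ^ 2 - (X ^ 5 + X ^ 3 - X ^ 2 - 1) * V
      = X ^ 4 + X ^ 3 + X ^ 2 + X + 1) : V = qV := by
  have hfac : (V - qV) * (X ^ 3 * (V + qV) - (X ^ 5 + X ^ 3 - X ^ 2 - 1)) = 0 := by
    linear_combination hV2 - qV_equation
  rcases mul_eq_zero.mp hfac with h | h
  · exact sub_eq_zero.mp h
  · exfalso
    have := congrArg (constantCoeff (R := ℚ)) h
    simp [map_sub, map_add, map_mul, map_pow, constantCoeff_X] at this

lemma qa_int (n : ℕ) : qa n ∈ (Int.castRingHom ℚ).range := by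
  induction n using Nat.strong_induction_on with
  | _ n ih =>
    have hif : ∀ (c : Prop) (_ : Decidable c) (x : ℚ),
        (c → x ∈ (Int.castRingHom ℚ).range) →
        (if c then x else 0) ∈ (Int.castRingHom ℚ).range := by
      intro c _ x hx
      split_ifs with h
      · exact hx h
      · exact ⟨0, by simp⟩
    have hsum : (if 3 ≤ n then ∑ i ∈ range (n-2), qa i * qa (n-3-i) else 0)
        ∈ (Int.castRingHom ℚ).range := by
      refine hif _ _ _ fun h3 => ?_
      refine Subring.sum_mem _ fun i hi => ?_
      rw [Finset.mem_range] at hi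
      exact Subring.mul_mem _ (ih i (by omega)) (ih (n-3-i) (by omega))
    rw [qa_eq]
    refine Subring.sub_mem _ (Subring.add_mem _ (Subring.add_mem _ (Subring.sub_mem _
      (hif _ _ _ fun _ => ⟨1, by simp⟩)
      (hif _ _ _ fun h => ih (n-2) (by omega)))
      (hif _ _ _ fun h => ih (n-3) (by omega)))
      (hif _ _ _ fun h => ih (n-5) (by omega))) hsum

/-- There is a unique formal power series `V ∈ ℚ[[q]]` with constant term `1`
satisfying `q³·V² − (q⁵ + q³ − q² − 1)·V = q⁴ + q³ + q² + q + 1`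
(the `q`-deformation of `√5`); it has integer coefficients, with
`V = 1 + q + q⁶ − q⁸ − q⁹ − q¹⁰ + O(q¹¹)`. -/
theorem q_sqrt_five :
    (∃! V : PowerSeries ℚ, constantCoeff V = 1 ∧
        X ^ 3 * V ^ 2 - (X ^ 5 + X ^ 3 - X ^ 2 - 1) * V = X ^ 4 + X ^ 3 + X ^ 2 + X + 1) ∧
    (∀ V : PowerSeries ℚ, constantCoeff V = 1 →
        X ^ 3 * V ^ 2 - (X ^ 5 + X ^ 3 - X ^ 2 - 1) * V = X ^ 4 + X ^ 3 + X ^ 2 + X + 1 →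
        (∀ n : ℕ, ∃ m : ℤ, coeff n V = (m : ℚ)) ∧
        coeff 0 V = 1 ∧ coeff 1 V = 1 ∧ coeff 2 V = 0 ∧ coeff 3 V = 0 ∧
        coeff 4 V = 0 ∧ coeff 5 V = 0 ∧ coeff 6 V = 1 ∧ coeff 7 V = 0 ∧
        coeff 8 V = -1 ∧ coeff 9 V = -1 ∧ coeff 10 V = -1) := by
  have c0 : qa 0 = 1 := by rw [qa_eq]; norm_num
  have c1 : qa 1 = 1 := by rw [qa_eq]; norm_num
  have c2 : qa 2 = 0 := by rw [qa_eq]; norm_num [c0]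
  have c3 : qa 3 = 0 := by
    rw [qa_eq]; norm_num [Finset.sum_range_succ, c0, c1]
  have c4 : qa 4 = 0 := by
    rw [qa_eq]; norm_num [Finset.sum_range_succ, c0, c1, c2]
  have c5 : qa 5 = 0 := by
    rw [qa_eq]; norm_num [Finset.sum_range_succ, c0, c1, c2, c3]
  have c6 : qa 6 = 1 := by
    rw [qa_eq]; norm_num [Finset.sum_range_succ, c0, c1, c2, c3, c4]
  have c7 : qa 7 = 0 := by
    rw [qa_eq]; norm_num [Finset.sum_range_succ, c0, c1, c2, c3, c4, c5]
  have c8 : qa 8 = -1 := by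
    rw [qa_eq]; norm_num [Finset.sum_range_succ, c0, c1, c2, c3, c4, c5, c6]
  have c9 : qa 9 = -1 := by
    rw [qa_eq]; norm_num [Finset.sum_range_succ, c0, c1, c2, c3, c4, c5, c6, c7]
  have c10 : qa 10 = -1 := by
    rw [qa_eq]; norm_num [Finset.sum_range_succ, c0, c1, c2, c3, c4, c5, c6, c7, c8]
  refine ⟨⟨qV, ⟨constCoeff_qV, qV_equation⟩, fun W hW => qV_unique W hW.1 hW.2⟩, ?_⟩
  intro V hV1 hV2
  have hVq : V = qV := qV_unique V hV1 hV2
  subst hVq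
  refine ⟨fun n => ?_, ?_, ?_, ?_, ?_, ?_, ?_, ?_, ?_, ?_, ?_, ?_⟩
  · obtain ⟨m, hm⟩ := qa_int n
    exact ⟨m, by rw [coeff_qV]; exact hm.symm⟩
  all_goals simp only [coeff_qV, c0, c1, c2, c3, c4, c5, c6, c7, c8, c9, c10]
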